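/- (Diewert's mean value theorem) Let φ: [0,1] → ℝ be lower semicontinuous and real-valued. Then there exists t ∈ [0,1) such that φ(1) − φ(0) ≤ φ↓(t, 1), where φ↓(t, d) = liminf_{s↓0} (φ(t + s d) − φ(t))/s is the lower Dini directional derivative. -/

import Mathlib

open Set Filter Topology

/-- Lower Dini directional derivative of a real-valued function on `ℝ`:
`liminf_{s → 0+} (φ (t + s d) - φ t) / s`, valued in `EReal`. -/
noncomputable def dini (φ : ℝ → ℝ) (t d : ℝ) : EReal :=
  Filter.liminf (fun s : ℝ => (((φ (t + s * d) - φ t) / s : ℝ) : EReal))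
    (nhdsWithin 0 (Set.Ioi 0))

lemma lsc_restrict {f : ℝ → ℝ} {s : Set ℝ} (h : LowerSemicontinuousOn f s) :
    LowerSemicontinuous (s.restrict f) := by
  intro x y hy
  have hx := h x x.2 y hy
  have : Filter.map Subtype.val (𝓝 x) = 𝓝[s] (x : ℝ) := map_nhds_subtype_val x
  rw [← this] at hx
  exact hx

lemma lsc_exists_min {f : ℝ → ℝ} (h : LowerSemicontinuousOn f (Icc (0:ℝ) 1)) :
    ∃ x ∈ Icc (0:ℝ) 1, ∀ y ∈ Icc (0:ℝ) 1, f x ≤ f y := by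
  have hr := lsc_restrict h
  set S : (Icc (0:ℝ) 1) → Set (Icc (0:ℝ) 1) :=
    fun y => (Icc (0:ℝ) 1).restrict f ⁻¹' Iic (f y) with hS
  have hcl : ∀ y, IsClosed (S y) := fun y => hr.isClosed_preimage _
  have hne : ∀ y, (S y).Nonempty := fun y => ⟨y, by simp [hS]; exact le_refl _⟩
  have hdir : Directed (· ⊇ ·) S := by
    intro y z
    rcases le_total (f y) (f z) with hyz | hyz
    · exact ⟨y, subset_refl _, fun x hx => le_trans hx hyz⟩
    · exact ⟨z, fun x hx => le_trans hx hyz, subset_refl _⟩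
  have : Nonempty (Icc (0:ℝ) 1) := ⟨⟨0, by norm_num⟩⟩
  obtain ⟨x, hx⟩ := IsCompact.nonempty_iInter_of_directed_nonempty_isCompact_isClosed
    S hdir hne (fun y => (hcl y).isCompact) hcl
  refine ⟨x, x.2, fun y hy => ?_⟩
  exact mem_iInter.1 hx ⟨y, hy⟩

theorem stmt_10 (φ : ℝ → ℝ) (hlsc : LowerSemicontinuousOn φ (Set.Icc (0 : ℝ) 1)) :
    ∃ t ∈ Set.Ico (0 : ℝ) 1, ((φ 1 - φ 0 : ℝ) : EReal) ≤ dini φ t 1 := by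
  set c : ℝ := φ 1 - φ 0 with hc
  set ψ : ℝ → ℝ := fun t => φ t + (-(c * t)) with hψ
  have hψlsc : LowerSemicontinuousOn ψ (Icc (0:ℝ) 1) := by
    apply LowerSemicontinuousOn.add hlsc
    exact (Continuous.lowerSemicontinuous (by continuity)).lowerSemicontinuousOn _
  obtain ⟨x, hxmem, hxmin⟩ := lsc_exists_min hψlsc
  have hψ01 : ψ 1 = ψ 0 := by simp [hψ, hc]
  -- choose a minimizer in [0,1)
  set t : ℝ := if x = 1 then 0 else x with ht
  have htmem : t ∈ Ico (0:ℝ) 1 := by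
    by_cases hx1 : x = 1
    · simp [ht, hx1]
    · simp only [ht, if_neg hx1]
      exact ⟨hxmem.1, lt_of_le_of_ne hxmem.2 hx1⟩
  have htmin : ∀ y ∈ Icc (0:ℝ) 1, ψ t ≤ ψ y := by
    by_cases hx1 : x = 1
    · intro y hy
      have := hxmin y hy
      rw [hx1, hψ01] at this
      simpa [ht, hx1] using this
    · intro y hy
      simpa [ht, hx1] using hxmin y hy
  refine ⟨t, htmem, ?_⟩
  have h1t : (0:ℝ) < 1 - t := by linarith [htmem.2]
  rw [dini]
  apply Filter.le_liminf_of_le (by isBoundedDefault)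
  have hmem : Ioo (0:ℝ) (1 - t) ∈ 𝓝[>] (0:ℝ) :=
    Ioo_mem_nhdsGT_of_mem ⟨le_refl _, h1t⟩
  filter_upwards [hmem] with s hs
  have hts : t + s ∈ Icc (0:ℝ) 1 := ⟨by linarith [htmem.1, hs.1], by linarith [hs.2]⟩
  have h := htmin (t + s) hts
  have key : c ≤ (φ (t + s * 1) - φ t) / s := by
    rw [le_div_iff₀ hs.1]
    simp only [mul_one]
    have : ψ (t + s) = φ (t + s) - c * (t + s) := by simp [hψ]; ring
    simp only [hψ] at h
    nlinarith [h]
  exact_mod_cast EReal.coe_le_coe_iff.2 key
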